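/- Under hypotheses H(A), H(J), H(γ,f) and (H_s), for every w ∈ V the functional v ↦ ℒ(w,v) attains its infimum over V at a unique point; hence the operator Λ : V → V, Λw := argmin_{v ∈ V} ℒ(w,v), is well defined. -/

import Mathlib

open Filter Topology Set

/-- Clarke generalized directional derivative of `j` at `x` in direction `v`. -/
noncomputable def clarkeDeriv {Y : Type*} [NormedAddCommGroup Y] [NormedSpace ℝ Y]
    (j : Y → ℝ) (x v : Y) : ℝ :=
  Filter.limsup (fun p : Y × ℝ => (j (p.1 + p.2 • v) - j p.1) / p.2)
    ((nhds x) ×ˢ (nhdsWithin (0 : ℝ) (Set.Ioi (0 : ℝ))))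

/-- Clarke generalized subdifferential of `j` at `x`. -/
noncomputable def clarkeSubdiff {Y : Type*} [NormedAddCommGroup Y] [NormedSpace ℝ Y]
    (j : Y → ℝ) (x : Y) : Set (Y →L[ℝ] ℝ) :=
  {ξ : Y →L[ℝ] ℝ | ∀ v : Y, ξ v ≤ clarkeDeriv j x v}

namespace StmtAux

variable {Y : Type*} [NormedAddCommGroup Y] [NormedSpace ℝ Y]

/-- The filter used in the Clarke derivative. -/
noncomputable def cF (x : Y) : Filter (Y × ℝ) :=
  (nhds x) ×ˢ (nhdsWithin (0 : ℝ) (Set.Ioi (0 : ℝ)))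

/-- The slope function used in the Clarke derivative. -/
noncomputable def cS (j : Y → ℝ) (d : Y) (p : Y × ℝ) : ℝ := (j (p.1 + p.2 • d) - j p.1) / p.2

lemma clarkeDeriv_eq (j : Y → ℝ) (x d : Y) :
    clarkeDeriv j x d = Filter.limsup (cS j d) (cF x) := rfl

instance cF_neBot (x : Y) : (cF x).NeBot := by
  have h2 : (𝓝[>] (0:ℝ)).NeBot := inferInstance
  exact Filter.prod_neBot.2 ⟨inferInstance, h2⟩

lemma ev_pos (x : Y) : ∀ᶠ p : Y × ℝ in cF x, (0:ℝ) < p.2 := by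
  have h : ∀ᶠ t in 𝓝[>] (0:ℝ), (0:ℝ) < t := eventually_mem_nhdsWithin
  exact tendsto_snd.eventually h

lemma tendsto_move (x d : Y) :
    Tendsto (fun p : Y × ℝ => p.1 + p.2 • d) (cF x) (𝓝 x) := by
  have h1 : Tendsto (fun p : Y × ℝ => p.1) (cF x) (𝓝 x) := tendsto_fst
  have h2 : Tendsto (fun p : Y × ℝ => p.2) (cF x) (𝓝 (0:ℝ)) :=
    tendsto_snd.mono_right nhdsWithin_le_nhds
  have := h1.add (h2.smul_const d)
  simpa using this

lemma cS_bound {j : Y → ℝ} (hj : LocallyLipschitz j) (x d : Y) :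
    ∃ C : ℝ, 0 ≤ C ∧ ∀ᶠ p in cF x, |cS j d p| ≤ C := by
  obtain ⟨K, t, ht, hlip⟩ := hj x
  refine ⟨K * ‖d‖, by positivity, ?_⟩
  have hev : ∀ᶠ y in 𝓝 x, y ∈ t := ht
  have h1 : ∀ᶠ p : Y × ℝ in cF x, p.1 ∈ t :=
    (tendsto_fst : Tendsto (fun p : Y × ℝ => p.1) (cF x) (𝓝 x)).eventually hev
  have h2 : ∀ᶠ p : Y × ℝ in cF x, p.1 + p.2 • d ∈ t := (tendsto_move x d).eventually hev
  filter_upwards [h1, h2, ev_pos x] with p hp1 hp2 hp3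
  have hd : dist (j (p.1 + p.2 • d)) (j p.1) ≤ K * dist (p.1 + p.2 • d) p.1 :=
    hlip.dist_le_mul _ hp2 _ hp1
  have hdist : dist (p.1 + p.2 • d) p.1 = p.2 * ‖d‖ := by
    rw [dist_eq_norm]
    simp [norm_smul, abs_of_pos hp3]
  rw [Real.dist_eq, hdist] at hd
  have : |cS j d p| = |j (p.1 + p.2 • d) - j p.1| / p.2 := by
    rw [cS, abs_div, abs_of_pos hp3]
  rw [this, div_le_iff₀ hp3]
  calc |j (p.1 + p.2 • d) - j p.1| ≤ K * (p.2 * ‖d‖) := hd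
    _ = K * ‖d‖ * p.2 := by ring

lemma cS_bddAbove {j : Y → ℝ} (hj : LocallyLipschitz j) (x d : Y) :
    IsBoundedUnder (· ≤ ·) (cF x) (cS j d) := by
  obtain ⟨C, _, h⟩ := cS_bound hj x d
  exact ⟨C, by rw [eventually_map]; exact h.mono fun p hp => (abs_le.1 hp).2⟩

lemma cS_bddBelow {j : Y → ℝ} (hj : LocallyLipschitz j) (x d : Y) :
    IsBoundedUnder (· ≥ ·) (cF x) (cS j d) := by
  obtain ⟨C, _, h⟩ := cS_bound hj x d
  exact ⟨-C, by rw [eventually_map]; exact h.mono fun p hp => (abs_le.1 hp).1⟩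

lemma clarkeDeriv_lt_ev {j : Y → ℝ} (hj : LocallyLipschitz j) {x d : Y} {r : ℝ}
    (h : clarkeDeriv j x d < r) : ∀ᶠ p in cF x, cS j d p < r := by
  rw [clarkeDeriv_eq] at h
  exact eventually_lt_of_limsup_lt h (cS_bddAbove hj x d)

lemma clarkeDeriv_le {j : Y → ℝ} (hj : LocallyLipschitz j) {x d : Y} {r : ℝ}
    (h : ∀ᶠ p in cF x, cS j d p ≤ r) : clarkeDeriv j x d ≤ r := by
  rw [clarkeDeriv_eq]
  exact limsup_le_of_le ((cS_bddBelow hj x d).isCoboundedUnder_le) h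

lemma le_clarkeDeriv {j : Y → ℝ} (hj : LocallyLipschitz j) {x d : Y} {r : ℝ}
    (h : ∃ᶠ p in cF x, r ≤ cS j d p) : r ≤ clarkeDeriv j x d := by
  rw [clarkeDeriv_eq]
  exact le_limsup_of_frequently_le h (cS_bddAbove hj x d)

lemma smul_clarkeDeriv_le {j : Y → ℝ} (hj : LocallyLipschitz j) {μ : ℝ} (hμ : 0 < μ)
    (x d : Y) : μ * clarkeDeriv j x d ≤ clarkeDeriv j x (μ • d) := by
  by_contra hcon
  push_neg at hcon
  set r := (clarkeDeriv j x (μ • d) + μ * clarkeDeriv j x d) / 2 with hr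
  have h1 : clarkeDeriv j x (μ • d) < r := by rw [hr]; linarith
  have h2 : r < μ * clarkeDeriv j x d := by rw [hr]; linarith
  have hev := clarkeDeriv_lt_ev hj h1
  have hm : Tendsto (fun p : Y × ℝ => ((p.1 : Y), p.2 / μ)) (cF x) (cF x) := by
    refine Tendsto.prodMk tendsto_fst ?_
    rw [tendsto_nhdsWithin_iff]
    constructor
    · have := (tendsto_snd.mono_right nhdsWithin_le_nhds :
        Tendsto (fun p : Y × ℝ => p.2) (cF x) (𝓝 (0:ℝ))).div_const μ
      simpa [cF] using this
    · filter_upwards [ev_pos x] with p hp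
      exact div_pos hp hμ
  have hev2 : ∀ᶠ p : Y × ℝ in cF x, cS j (μ • d) ((p.1 : Y), p.2 / μ) < r := hm.eventually hev
  have hev3 : ∀ᶠ p in cF x, cS j d p ≤ r / μ := by
    filter_upwards [hev2, ev_pos x] with p h hp
    have hkey : cS j (μ • d) ((p.1 : Y), p.2 / μ) = μ * cS j d p := by
      simp only [cS, smul_smul]
      rw [div_mul_cancel₀ _ (ne_of_gt hμ)]
      field_simp
    rw [hkey] at h
    rw [le_div_iff₀ hμ]
    nlinarith
  have hle := clarkeDeriv_le hj hev3
  rw [le_div_iff₀ hμ] at hle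
  nlinarith

lemma neg_clarkeDeriv_le {j : Y → ℝ} (hj : LocallyLipschitz j) (x e : Y) :
    -clarkeDeriv j x e ≤ clarkeDeriv j x (-e) := by
  by_contra hcon
  push_neg at hcon
  set r := (clarkeDeriv j x e + -clarkeDeriv j x (-e)) / 2 with hr
  have h1 : clarkeDeriv j x e < r := by rw [hr]; linarith
  have hev := clarkeDeriv_lt_ev hj h1
  have hm : Tendsto (fun p : Y × ℝ => ((p.1 + p.2 • e : Y), p.2)) (cF x) (cF x) :=
    Tendsto.prodMk (tendsto_move x e) tendsto_snd
  have hfr : ∃ᶠ q : Y × ℝ in cF x, -r ≤ cS j (-e) q := by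
    apply hm.frequently
    apply Eventually.frequently
    filter_upwards [hev, ev_pos x] with p hp hp2
    have h3 : p.1 + p.2 • e + p.2 • (-e) = p.1 := by
      rw [smul_neg]; abel
    have : cS j (-e) ((p.1 + p.2 • e : Y), p.2) = -(cS j e p) := by
      simp only [cS, h3]
      rw [← neg_sub, neg_div]
    rw [this]
    linarith
  have := le_clarkeDeriv hj hfr
  rw [hr] at this
  linarith



lemma chain {k : ℝ → ℝ} {a b c : ℝ} (hab : a ≤ b) (hk : ContinuousOn k (Icc a b))
    (H : ∀ t ∈ Ico a b, ∀ r, c < r → ∃ᶠ z in 𝓝[>] t, slope k t z < r) :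
    k b ≤ k a + c * (b - a) := by
  have hB : ∀ t ∈ Ico a b, HasDerivWithinAt (fun t => k a + c * (t - a)) c (Ici t) t := by
    intro t _
    have h1 : HasDerivAt (fun t : ℝ => k a + c * (t - a)) c t := by
      have := (((hasDerivAt_id t).sub_const a).const_mul c).const_add (k a)
      simpa using this
    exact h1.hasDerivWithinAt
  have hcont : ContinuousOn (fun t : ℝ => k a + c * (t - a)) (Icc a b) :=
    (continuous_const.add (continuous_const.mul (continuous_id.sub continuous_const))).continuousOn
  have := image_le_of_liminf_slope_right_le_deriv_boundary (B' := fun _ => c) hk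
      (by simp) hcont hB H
  simpa using this (right_mem_Icc.2 hab)

lemma jmid {Y : Type*} [NormedAddCommGroup Y] [NormedSpace ℝ Y]
    {j : Y → ℝ} (hj : LocallyLipschitz j) (x e : Y) {M : ℝ} (hM : 0 ≤ M)
    (H : ∀ s t : ℝ, s < t →
      clarkeDeriv j (x + s • e) e + clarkeDeriv j (x + t • e) (-e) ≤ M * (t - s)) :
    j (x + (2⁻¹ : ℝ) • e) ≤ (j x + j (x + e)) / 2 + M / 8 := by
  set k : ℝ → ℝ := fun t => j (x + t • e) + M / 2 * t ^ 2 with hkdef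
  set Vf : ℝ → ℝ := fun t => clarkeDeriv j (x + t • e) e + M * t with hVf
  set Uf : ℝ → ℝ := fun t => -clarkeDeriv j (x + t • e) (-e) + M * t with hUf
  have hUV : ∀ t, Uf t ≤ Vf t := by
    intro t
    have := neg_clarkeDeriv_le hj (x + t • e) e
    simp only [hUf, hVf]
    linarith
  have hcross : ∀ s t : ℝ, s < t → Vf s ≤ Uf t := by
    intro s t hst
    have h1 := H s t hst
    simp only [hUf, hVf]
    linarith
  have hkc : Continuous k := by
    apply Continuous.add
    · exact hj.continuous.comp (by continuity)
    · continuity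
  -- upper bound on slopes near `t`
  have CU : ∀ t r : ℝ, Vf t < r → ∀ᶠ z in 𝓝[>] t, slope k t z < r := by
    intro t r hrV
    set ε := r - Vf t with hε
    have hεpos : 0 < ε := by simp only [hε]; linarith
    have h1 : clarkeDeriv j (x + t • e) e < clarkeDeriv j (x + t • e) e + ε / 2 := by linarith
    have hev := clarkeDeriv_lt_ev hj h1
    have hsub : Tendsto (fun z : ℝ => z - t) (𝓝[>] t) (𝓝[>] (0:ℝ)) := by
      rw [tendsto_nhdsWithin_iff]
      refine ⟨?_, ?_⟩
      · have h := (continuous_sub_right t).tendsto t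
        rw [sub_self] at h
        exact h.mono_left nhdsWithin_le_nhds
      · filter_upwards [eventually_mem_nhdsWithin] with z hz
        exact sub_pos.2 (Set.mem_Ioi.1 hz)
    have hmap : Tendsto (fun z : ℝ => ((x + t • e : Y), z - t)) (𝓝[>] t) (cF (x + t • e)) :=
      Tendsto.prodMk tendsto_const_nhds hsub
    have hev2 := hmap.eventually hev
    have hsm : ∀ᶠ z in 𝓝[>] t, M / 2 * (z - t) < ε / 2 := by
      have hten : Tendsto (fun z : ℝ => M / 2 * (z - t)) (𝓝[>] t) (𝓝 (0:ℝ)) := by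
        have := (hsub.mono_right nhdsWithin_le_nhds).const_mul (M / 2)
        simpa using this
      exact hten (Iio_mem_nhds (by positivity))
    filter_upwards [hev2, hsm, eventually_mem_nhdsWithin] with z h2 h3 (h4 : t < z)
    have hzt : (0:ℝ) < z - t := sub_pos.2 h4
    have hxe : x + t • e + (z - t) • e = x + z • e := by
      rw [sub_smul]; abel
    have hslope : slope k t z = cS j e ((x + t • e : Y), z - t) + M / 2 * (z + t) := by
      rw [slope_def_field]
      simp only [hkdef, cS, hxe]
      field_simp
      ring
    rw [hslope]
    have h5 : cS j e ((x + t • e : Y), z - t) < clarkeDeriv j (x + t • e) e + ε / 2 := h2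
    have h6 : M / 2 * (z + t) = M * t + M / 2 * (z - t) := by ring
    have h7 : Vf t = clarkeDeriv j (x + t • e) e + M * t := rfl
    rw [h6]
    have : r = Vf t + ε := by simp only [hε]; ring
    rw [this, h7]
    linarith
  -- lower bound on slopes near `t`
  have CL : ∀ t r : ℝ, r < Uf t → ∀ᶠ z in 𝓝[>] t, r < slope k t z := by
    intro t r hrU
    set ε := Uf t - r with hε
    have hεpos : 0 < ε := by simp only [hε]; linarith
    have h1 : clarkeDeriv j (x + t • e) (-e) < clarkeDeriv j (x + t • e) (-e) + ε / 2 := by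
      linarith
    have hev := clarkeDeriv_lt_ev hj h1
    have hsub : Tendsto (fun z : ℝ => z - t) (𝓝[>] t) (𝓝[>] (0:ℝ)) := by
      rw [tendsto_nhdsWithin_iff]
      refine ⟨?_, ?_⟩
      · have h := (continuous_sub_right t).tendsto t
        rw [sub_self] at h
        exact h.mono_left nhdsWithin_le_nhds
      · filter_upwards [eventually_mem_nhdsWithin] with z hz
        exact sub_pos.2 (Set.mem_Ioi.1 hz)
    have hmap : Tendsto (fun z : ℝ => ((x + z • e : Y), z - t)) (𝓝[>] t) (cF (x + t • e)) := by
      refine Tendsto.prodMk ?_ hsub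
      have hc : Continuous fun z : ℝ => x + z • e := by continuity
      exact (hc.tendsto t).mono_left nhdsWithin_le_nhds
    have hev2 := hmap.eventually hev
    filter_upwards [hev2, eventually_mem_nhdsWithin] with z h2 (h4 : t < z)
    have hzt : (0:ℝ) < z - t := sub_pos.2 h4
    have hxe : x + z • e + (z - t) • (-e) = x + t • e := by
      rw [smul_neg, sub_smul]; abel
    have hcs : cS j (-e) ((x + z • e : Y), z - t)
        = -((j (x + z • e) - j (x + t • e)) / (z - t)) := by
      simp only [cS, hxe]
      rw [← neg_sub, neg_div]
    rw [hcs] at h2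
    have hslope : slope k t z = (j (x + z • e) - j (x + t • e)) / (z - t) + M / 2 * (z + t) := by
      rw [slope_def_field]
      simp only [hkdef]
      field_simp
      ring
    rw [hslope]
    have h6 : M / 2 * (z + t) = M * t + M / 2 * (z - t) := by ring
    have h7 : Uf t = -clarkeDeriv j (x + t • e) (-e) + M * t := rfl
    have h8 : 0 ≤ M / 2 * (z - t) := by positivity
    rw [h6]
    have h9 : r = Uf t - ε := by simp only [hε]; ring
    rw [h9, h7]
    linarith
  -- chain on [0, 1/2]
  have hc1 : k 2⁻¹ ≤ k 0 + Uf 2⁻¹ * (2⁻¹ - 0) := by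
    apply chain (by norm_num) hkc.continuousOn
    intro t ht r hrr
    exact ((CU t r (lt_of_le_of_lt (hcross t 2⁻¹ ht.2) hrr))).frequently
  -- chain on [1/2, 1] for `-k`
  have hc2 : (-k) 1 ≤ (-k) 2⁻¹ + (-(Uf 2⁻¹)) * (1 - 2⁻¹) := by
    apply chain (by norm_num) hkc.neg.continuousOn
    intro t ht r hrr
    have h2 : -r < Uf t := by
      rcases eq_or_lt_of_le ht.1 with heq | hlt
      · rw [← heq]; exact neg_lt.mp hrr
      · exact (neg_lt.mp hrr).trans_le ((hUV 2⁻¹).trans (hcross 2⁻¹ t hlt))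
    apply Eventually.frequently
    filter_upwards [CL t (-r) h2, eventually_mem_nhdsWithin] with z hz (h4 : t < z)
    have hns : slope (fun x => -k x) t z = -slope k t z := by
      rw [slope_def_field, slope_def_field]
      ring
    show slope (fun x => -k x) t z < r
    rw [hns]
    linarith
  have e1 : k 0 = j x := by simp [hkdef]
  have e2 : k 1 = j (x + e) + M / 2 := by simp [hkdef]
  have e3 : k 2⁻¹ = j (x + (2⁻¹:ℝ) • e) + M / 8 := by
    simp only [hkdef]
    norm_num
    ring
  simp only [Pi.neg_apply] at hc2
  rw [e1] at hc1
  rw [e2] at hc2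
  rw [e3] at hc1 hc2
  have hhalf : (2⁻¹ - 0 : ℝ) = 2⁻¹ := by norm_num
  have hhalf2 : (1 - 2⁻¹ : ℝ) = 2⁻¹ := by norm_num
  rw [hhalf] at hc1
  rw [hhalf2] at hc2
  linarith



section FA

variable {V : Type*} [NormedAddCommGroup V] [NormedSpace ℝ V]
variable (A : V → V →L[ℝ] ℝ) (F_A : V → ℝ)

lemma psi_hasDerivAt (hA_pot : ∀ u v : V, HasLineDerivAt ℝ F_A (A u v) u v)
    (u d : V) (t : ℝ) :
    HasDerivAt (fun s : ℝ => F_A (u + s • d)) (A (u + t • d) d) t := by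
  have h0 : HasDerivAt (fun s : ℝ => F_A (u + t • d + s • d)) (A (u + t • d) d) 0 :=
    hA_pot (u + t • d) d
  have h0' : HasDerivAt (fun s : ℝ => F_A (u + t • d + s • d)) (A (u + t • d) d) (t - t) := by
    rw [sub_self]; exact h0
  have hφ : HasDerivAt (fun s : ℝ => s - t) 1 t := (hasDerivAt_id t).sub_const t
  have hcomp : HasDerivAt ((fun s : ℝ => F_A (u + t • d + s • d)) ∘ fun s : ℝ => s - t)
      ((A (u + t • d)) d * 1) t := HasDerivAt.comp t h0' hφ
  have hfun : ((fun s : ℝ => F_A (u + t • d + s • d)) ∘ fun s : ℝ => s - t)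
      = fun s : ℝ => F_A (u + s • d) := by
    funext s
    simp only [Function.comp]
    congr 1
    rw [sub_smul]; abel
  rw [hfun, mul_one] at hcomp
  exact hcomp

lemma FA_mid (hA_pot : ∀ u v : V, HasLineDerivAt ℝ F_A (A u v) u v)
    {m_A : ℝ} (hA_mono : ∀ u v : V, m_A * ‖u - v‖ ^ 2 ≤ (A u - A v) (u - v)) (u v : V) :
    F_A ((2⁻¹:ℝ) • (u + v)) ≤ (F_A u + F_A v) / 2 - m_A / 8 * ‖u - v‖ ^ 2 := by
  set d := v - u with hd
  set c := m_A * ‖d‖ ^ 2 with hc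
  set χ : ℝ → ℝ := fun t => F_A (u + t • d) - c / 2 * t ^ 2 with hχdef
  have hχ : ∀ t : ℝ, HasDerivAt χ (A (u + t • d) d - c * t) t := by
    intro t
    have h1 := psi_hasDerivAt A F_A hA_pot u d t
    have h2 : HasDerivAt (fun t : ℝ => c / 2 * t ^ 2) (c * t) t := by
      have := (hasDerivAt_pow 2 t).const_mul (c / 2)
      refine this.congr_deriv ?_
      norm_num
      ring
    exact h1.sub h2
  have hmono : Monotone (deriv χ) := by
    have hderiv : deriv χ = fun t => A (u + t • d) d - c * t := funext fun t => (hχ t).deriv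
    rw [hderiv]
    intro s t hst
    rcases eq_or_lt_of_le hst with rfl | h
    · exact le_refl _
    · have hm := hA_mono (u + t • d) (u + s • d)
      have hdiff : (u + t • d) - (u + s • d) = (t - s) • d := by
        rw [sub_smul]; abel
      rw [hdiff] at hm
      have happ : (A (u + t • d) - A (u + s • d)) ((t - s) • d)
          = (t - s) * ((A (u + t • d)) d - (A (u + s • d)) d) := by
        rw [map_smul]
        simp only [ContinuousLinearMap.sub_apply, smul_eq_mul]
      have hnorm : ‖(t - s) • d‖ ^ 2 = (t - s) ^ 2 * ‖d‖ ^ 2 := by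
        rw [norm_smul, Real.norm_eq_abs, mul_pow, sq_abs]
      rw [happ, hnorm] at hm
      have hts : 0 < t - s := sub_pos.2 h
      have h3 : c * (t - s) ≤ (A (u + t • d)) d - (A (u + s • d)) d := by
        rw [hc]
        nlinarith [hm]
      simp only
      linarith
  have hconv : ConvexOn ℝ Set.univ χ :=
    Monotone.convexOn_univ_of_deriv (fun t => (hχ t).differentiableAt) hmono
  have hmid := hconv.2 (Set.mem_univ (0:ℝ)) (Set.mem_univ (1:ℝ))
    (by norm_num : (0:ℝ) ≤ 2⁻¹) (by norm_num : (0:ℝ) ≤ 2⁻¹) (by norm_num)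
  simp only [smul_eq_mul, mul_zero, mul_one, zero_add] at hmid
  have e0 : χ 0 = F_A u := by simp [hχdef]
  have e1 : χ 1 = F_A v - c / 2 := by
    simp only [hχdef, one_smul, one_pow, mul_one, hd]
    congr 2
    abel
  have e2 : χ 2⁻¹ = F_A ((2⁻¹:ℝ) • (u + v)) - c / 8 := by
    have huv : u + (2⁻¹:ℝ) • d = (2⁻¹:ℝ) • (u + v) := by
      rw [hd]
      module
    simp only [hχdef, huv]
    norm_num
    ring
  rw [e0, e1, e2] at hmid
  have hnorm2 : ‖d‖ ^ 2 = ‖u - v‖ ^ 2 := by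
    rw [hd, norm_sub_rev]
  have hc8 : c = m_A * ‖u - v‖ ^ 2 := by rw [hc, hnorm2]
  rw [hc8] at hmid
  linarith

lemma FA_lip {L_A : ℝ} (hL_A : 0 < L_A)
    (hA_lip : ∀ u v : V, ‖A u - A v‖ ≤ L_A * ‖u - v‖)
    (hA_pot : ∀ u v : V, HasLineDerivAt ℝ F_A (A u v) u v) (u v : V) :
    |F_A v - F_A u| ≤ (‖A u‖ + L_A * ‖v - u‖) * ‖v - u‖ := by
  set d := v - u with hd
  have hψ : ∀ t ∈ Set.Icc (0:ℝ) 1,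
      HasDerivWithinAt (fun s : ℝ => F_A (u + s • d)) ((A (u + t • d)) d) (Set.Icc 0 1) t :=
    fun t _ => (psi_hasDerivAt A F_A hA_pot u d t).hasDerivWithinAt
  have hbound : ∀ t ∈ Set.Icc (0:ℝ) 1, ‖(A (u + t • d)) d‖ ≤ (‖A u‖ + L_A * ‖d‖) * ‖d‖ := by
    intro t ht
    have h0 : ‖(A (u + t • d)) d‖ ≤ ‖A (u + t • d)‖ * ‖d‖ := (A _).le_opNorm d
    have h1 : ‖A (u + t • d) - A u‖ ≤ L_A * ‖(u + t • d) - u‖ := hA_lip _ _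
    have h2 : ‖(u + t • d) - u‖ = |t| * ‖d‖ := by
      rw [add_sub_cancel_left, norm_smul, Real.norm_eq_abs]
    have h3 : |t| ≤ 1 := abs_le.2 ⟨by linarith [ht.1], ht.2⟩
    have h4 : ‖A (u + t • d)‖ ≤ ‖A u‖ + ‖A (u + t • d) - A u‖ := by
      have := norm_add_le (A u) (A (u + t • d) - A u)
      simpa using this
    have h5 : ‖A (u + t • d)‖ ≤ ‖A u‖ + L_A * ‖d‖ := by
      have := mul_le_mul_of_nonneg_left h3 (by positivity : (0:ℝ) ≤ L_A * ‖d‖)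
      nlinarith
    nlinarith [norm_nonneg d, norm_nonneg (A (u + t • d))]
  have hmvt := Convex.norm_image_sub_le_of_norm_hasDerivWithin_le hψ hbound (convex_Icc 0 1)
    (Set.left_mem_Icc.2 zero_le_one) (Set.right_mem_Icc.2 zero_le_one)
  simp only [one_smul, zero_smul, add_zero] at hmvt
  have hv : u + d = v := by rw [hd]; abel
  rw [hv] at hmvt
  calc |F_A v - F_A u| = ‖F_A v - F_A u‖ := (Real.norm_eq_abs _).symm
    _ ≤ (‖A u‖ + L_A * ‖d‖) * ‖d‖ * ‖(1:ℝ) - 0‖ := hmvt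
    _ = (‖A u‖ + L_A * ‖v - u‖) * ‖v - u‖ := by
        rw [hd]; norm_num

lemma FA_cont {L_A : ℝ} (hL_A : 0 < L_A)
    (hA_lip : ∀ u v : V, ‖A u - A v‖ ≤ L_A * ‖u - v‖)
    (hA_pot : ∀ u v : V, HasLineDerivAt ℝ F_A (A u v) u v) :
    Continuous F_A := by
  rw [continuous_iff_continuousAt]
  intro u
  apply continuousAt_of_locally_lipschitz zero_lt_one (‖A u‖ + L_A)
  intro y hy
  have h := FA_lip A F_A hL_A hA_lip hA_pot u y
  rw [Real.dist_eq, dist_eq_norm]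
  have hn : ‖y - u‖ < 1 := by rwa [dist_eq_norm] at hy
  nlinarith [norm_nonneg (y - u), norm_nonneg (A u),
    mul_le_mul_of_nonneg_left hn.le (by positivity : (0:ℝ) ≤ L_A * ‖y - u‖)]

end FA



lemma exists_unique_min {V : Type*} [NormedAddCommGroup V] [NormedSpace ℝ V] [CompleteSpace V]
    (g : V → ℝ) (hgc : Continuous g) {κ : ℝ} (hκ : 0 < κ)
    (hmid : ∀ u v : V, g ((2⁻¹:ℝ) • (u + v)) ≤ (g u + g v) / 2 - κ * ‖u - v‖ ^ 2)
    {K δ : ℝ} (hδ : 0 < δ) (hK : 0 ≤ K)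
    (hloc : ∀ v : V, ‖v‖ ≤ δ → g 0 - K * ‖v‖ ≤ g v) :
    ∃! u : V, ∀ v : V, g u ≤ g v := by
  -- iterated midpoint inequality
  have hind : ∀ n : ℕ, ∀ v : V,
      (2:ℝ)^n * (g (((2:ℝ)^n)⁻¹ • v) - g 0) + 2 * κ * ‖v‖^2 * (1 - ((2:ℝ)^n)⁻¹)
        ≤ g v - g 0 := by
    intro n
    induction n with
    | zero => intro v; simp
    | succ n ih =>
      intro v
      have h1 := ih v
      have h2 := hmid (((2:ℝ)^n)⁻¹ • v) 0
      rw [add_zero, sub_zero] at h2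
      rw [smul_smul] at h2
      have hP : (0:ℝ) < (2:ℝ)^n := by positivity
      have hpow : (2:ℝ)⁻¹ * ((2:ℝ)^n)⁻¹ = ((2:ℝ)^(n+1))⁻¹ := by
        rw [← mul_inv, ← pow_succ']
      rw [hpow] at h2
      have hnrm : ‖((2:ℝ)^n)⁻¹ • v‖^2 = (((2:ℝ)^n)⁻¹)^2 * ‖v‖^2 := by
        rw [norm_smul, Real.norm_eq_abs, mul_pow, sq_abs]
      rw [hnrm] at h2
      have hP1 : ((2:ℝ)^(n+1)) = 2 * (2:ℝ)^n := by rw [pow_succ]; ring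
      -- key step
      have key : 2 * (2:ℝ)^n * (g (((2:ℝ)^(n+1))⁻¹ • v) - g 0)
          ≤ (2:ℝ)^n * (g (((2:ℝ)^n)⁻¹ • v) - g 0) - 2 * κ * (((2:ℝ)^n)⁻¹) * ‖v‖^2 := by
        have h3 := mul_le_mul_of_nonneg_left
          (sub_le_sub_right h2 (g 0)) (by positivity : (0:ℝ) ≤ 2 * (2:ℝ)^n)
        have heq : 2 * (2:ℝ)^n * ((g (((2:ℝ)^n)⁻¹ • v) + g 0) / 2
              - κ * ((((2:ℝ)^n)⁻¹)^2 * ‖v‖^2) - g 0)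
            = (2:ℝ)^n * (g (((2:ℝ)^n)⁻¹ • v) - g 0)
              - 2 * κ * (((2:ℝ)^n)⁻¹) * ‖v‖^2 := by
          field_simp
          ring
        rw [heq] at h3
        exact h3
      have hfin : 2 * κ * ‖v‖^2 * (1 - ((2:ℝ)^(n+1))⁻¹)
            - 2 * κ * (((2:ℝ)^n)⁻¹) * ‖v‖^2 - 2 * κ * ‖v‖^2 * (1 - ((2:ℝ)^n)⁻¹)
          = -(κ * ‖v‖^2 * (((2:ℝ)^n)⁻¹) ) := by
        rw [← hpow]
        ring
      have hnn : 0 ≤ κ * ‖v‖^2 * (((2:ℝ)^n)⁻¹) := by positivity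
      have key2 : ((2:ℝ)^(n+1)) * (g (((2:ℝ)^(n+1))⁻¹ • v) - g 0)
          = 2 * (2:ℝ)^n * (g (((2:ℝ)^(n+1))⁻¹ • v) - g 0) := by rw [hP1]
      linarith
  -- global lower bound
  have hlb : ∀ v : V, g 0 - K * ‖v‖ + κ * ‖v‖^2 ≤ g v := by
    intro v
    obtain ⟨n₀, hn₀⟩ := pow_unbounded_of_one_lt (‖v‖ / δ) (one_lt_two (α := ℝ))
    set N := n₀ + 1 with hN
    have hPpos : (0:ℝ) < (2:ℝ)^N := by positivity
    have hsmall : ‖((2:ℝ)^N)⁻¹ • v‖ ≤ δ := by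
      have h2 : (2:ℝ)^n₀ ≤ (2:ℝ)^N := by
        apply pow_le_pow_right₀ (by norm_num)
        omega
      have h3 : ‖v‖ < δ * (2:ℝ)^N := by
        rw [div_lt_iff₀ hδ] at hn₀
        nlinarith [hδ]
      rw [norm_smul, Real.norm_eq_abs, abs_inv, abs_pow, abs_two]
      rw [inv_mul_le_iff₀ hPpos]
      nlinarith
    have h1 := hind N v
    have h2 := hloc _ hsmall
    have h3 : ‖((2:ℝ)^N)⁻¹ • v‖ = ((2:ℝ)^N)⁻¹ * ‖v‖ := by
      rw [norm_smul, Real.norm_eq_abs, abs_inv, abs_pow, abs_two]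
    rw [h3] at h2
    have hA1 : -(K * ‖v‖) ≤ (2:ℝ)^N * (g (((2:ℝ)^N)⁻¹ • v) - g 0) := by
      have h4 : -(K * (((2:ℝ)^N)⁻¹ * ‖v‖)) ≤ g (((2:ℝ)^N)⁻¹ • v) - g 0 := by linarith
      have h5 := mul_le_mul_of_nonneg_left h4 hPpos.le
      have h6 : (2:ℝ)^N * -(K * (((2:ℝ)^N)⁻¹ * ‖v‖)) = -(K * ‖v‖) := by
        field_simp
      rw [h6] at h5
      exact h5
    have hA2 : κ * ‖v‖^2 ≤ 2 * κ * ‖v‖^2 * (1 - ((2:ℝ)^N)⁻¹) := by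
      have h4 : ((2:ℝ)^N)⁻¹ ≤ 2⁻¹ := by
        apply inv_anti₀ (by norm_num)
        calc (2:ℝ) = 2^1 := by norm_num
          _ ≤ 2^N := by apply pow_le_pow_right₀ (by norm_num); omega
      have h5 : (1:ℝ)/2 ≤ 1 - ((2:ℝ)^N)⁻¹ := by linarith
      have h6 := mul_le_mul_of_nonneg_left h5 (by positivity : (0:ℝ) ≤ 2 * κ * ‖v‖^2)
      calc κ * ‖v‖^2 = 2 * κ * ‖v‖^2 * (1/2) := by ring
        _ ≤ 2 * κ * ‖v‖^2 * (1 - ((2:ℝ)^N)⁻¹) := h6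
    linarith
  have hbdd : BddBelow (Set.range g) := by
    refine ⟨g 0 - K^2 / (4 * κ), ?_⟩
    rintro y ⟨v, rfl⟩
    have h1 := hlb v
    have h2 : K * ‖v‖ - κ * ‖v‖^2 ≤ K^2 / (4 * κ) := by
      rw [le_div_iff₀ (by positivity : (0:ℝ) < 4 * κ)]
      nlinarith [sq_nonneg (2 * κ * ‖v‖ - K)]
    linarith
  -- minimizing sequence
  set m := sInf (Set.range g) with hm
  have hne : (Set.range g).Nonempty := ⟨g 0, Set.mem_range_self 0⟩
  have hmle : ∀ v, m ≤ g v := fun v => csInf_le hbdd (Set.mem_range_self v)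
  have hseq : ∀ n : ℕ, ∃ u : V, g u < m + 1 / ((n:ℝ) + 1) := by
    intro n
    have hlt : m < m + 1 / ((n:ℝ) + 1) := lt_add_of_pos_right m (by positivity)
    obtain ⟨y, ⟨u, rfl⟩, hy⟩ := exists_lt_of_csInf_lt hne hlt
    exact ⟨u, hy⟩
  choose xs hxs using hseq
  have hdist : ∀ n p N : ℕ, N ≤ n → N ≤ p →
      dist (xs n) (xs p) ≤ Real.sqrt ((1 / ((N:ℝ) + 1)) / κ) := by
    intro n p N hn hp
    have h1 := hxs n
    have h2 := hxs p
    have h3 := hmid (xs n) (xs p)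
    have h4 := hmle ((2⁻¹:ℝ) • (xs n + xs p))
    have h5 : 1 / ((n:ℝ) + 1) ≤ 1 / ((N:ℝ) + 1) := by
      apply one_div_le_one_div_of_le (by positivity)
      have : (N:ℝ) ≤ n := by exact_mod_cast hn
      linarith
    have h6 : 1 / ((p:ℝ) + 1) ≤ 1 / ((N:ℝ) + 1) := by
      apply one_div_le_one_div_of_le (by positivity)
      have : (N:ℝ) ≤ p := by exact_mod_cast hp
      linarith
    have hsq : ‖xs n - xs p‖^2 ≤ (1 / ((N:ℝ) + 1)) / κ := by
      rw [le_div_iff₀ hκ]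
      nlinarith
    rw [dist_eq_norm]
    calc ‖xs n - xs p‖ = Real.sqrt (‖xs n - xs p‖^2) := (Real.sqrt_sq (norm_nonneg _)).symm
      _ ≤ Real.sqrt ((1 / ((N:ℝ) + 1)) / κ) := Real.sqrt_le_sqrt hsq
  have hb0 : Filter.Tendsto (fun N : ℕ => Real.sqrt ((1 / ((N:ℝ) + 1)) / κ))
      Filter.atTop (nhds 0) := by
    have h1 : Filter.Tendsto (fun N : ℕ => (1 / ((N:ℝ) + 1)) / κ) Filter.atTop (nhds 0) := by
      have h2 := tendsto_one_div_add_atTop_nhds_zero_nat (𝕜 := ℝ)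
      have := h2.div_const κ
      simpa using this
    have h3 := (Real.continuous_sqrt.tendsto 0).comp h1
    simpa [Function.comp_def] using h3
  have hcauchy : CauchySeq xs := cauchySeq_of_le_tendsto_0 _ hdist hb0
  obtain ⟨u, hu⟩ := cauchySeq_tendsto_of_complete hcauchy
  have hgu : Filter.Tendsto (fun n => g (xs n)) Filter.atTop (nhds (g u)) :=
    (hgc.continuousAt.tendsto).comp hu
  have hum : g u ≤ m := by
    have hup : Filter.Tendsto (fun n : ℕ => m + 1 / ((n:ℝ) + 1)) Filter.atTop (nhds (m + 0)) :=
      tendsto_const_nhds.add tendsto_one_div_add_atTop_nhds_zero_nat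
    rw [add_zero] at hup
    exact le_of_tendsto_of_tendsto' hgu hup fun n => (hxs n).le
  have hmin : ∀ v, g u ≤ g v := fun v => hum.trans (hmle v)
  refine ⟨u, hmin, ?_⟩
  intro y hy
  have h1 := hmid y u
  have h2 := hy ((2⁻¹:ℝ) • (y + u))
  have h3 := hy u
  have h4 := hmin y
  have h6 : κ * ‖y - u‖^2 ≤ 0 := by linarith
  have h7 : ‖y - u‖^2 ≤ 0 := by nlinarith
  have h8 : ‖y - u‖ = 0 := by nlinarith [norm_nonneg (y - u), sq_nonneg ‖y - u‖]
  have := norm_eq_zero.1 h8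
  exact sub_eq_zero.1 this

end StmtAux

open StmtAux in
set_option maxHeartbeats 1000000 in
theorem stmt5
    {V : Type*} [NormedAddCommGroup V] [NormedSpace ℝ V] [CompleteSpace V]
    {X : Type*} [NormedAddCommGroup X] [NormedSpace ℝ X] [CompleteSpace X]
    (hV_refl : Function.Surjective (NormedSpace.inclusionInDoubleDual ℝ V))
    (A : V → V →L[ℝ] ℝ) (F_A : V → ℝ) (L_A : ℝ) (hL_A : 0 < L_A)
    (hA_lip : ∀ u v : V, ‖A u - A v‖ ≤ L_A * ‖u - v‖)
    (hA_pot : ∀ u v : V, HasLineDerivAt ℝ F_A (A u v) u v)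
    (m_A : ℝ) (hm_A : 0 < m_A)
    (hA_mono : ∀ u v : V, m_A * ‖u - v‖ ^ 2 ≤ (A u - A v) (u - v))
    (J : X → X → ℝ)
    (hJ_lip : ∀ w : X, LocallyLipschitz (J w))
    (c₀ c₁ c₂ : ℝ) (hc₀ : 0 ≤ c₀) (hc₁ : 0 ≤ c₁) (hc₂ : 0 ≤ c₂)
    (hJ_bdd : ∀ w v : X, ∀ ξ ∈ clarkeSubdiff (J w) v, ‖ξ‖ ≤ c₀ + c₁ * ‖v‖ + c₂ * ‖w‖)
    (m_α m_L : ℝ) (hm_α : 0 ≤ m_α) (hm_L : 0 ≤ m_L)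
    (hJ_mono : ∀ w₁ w₂ v₁ v₂ : X,
      clarkeDeriv (J w₁) v₁ (v₂ - v₁) + clarkeDeriv (J w₂) v₂ (v₁ - v₂)
        ≤ m_α * ‖v₁ - v₂‖ ^ 2 + m_L * ‖w₁ - w₂‖ * ‖v₁ - v₂‖)
    (γ : V →L[ℝ] X) (f : V →L[ℝ] ℝ)
    (hs : (m_α + m_L) * ‖γ‖ ^ 2 < m_A)
    (w : V) :
    ∃! u : V, ∀ v : V,
      F_A u - f u + J (γ w) (γ u) ≤ F_A v - f v + J (γ w) (γ v) := by
  classical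
  set j : X → ℝ := J (γ w) with hjdef
  have hj : LocallyLipschitz j := hJ_lip (γ w)
  set g : V → ℝ := fun v => F_A v - f v + j (γ v) with hgdef
  set κ : ℝ := (m_A - m_α * ‖γ‖ ^ 2) / 8 with hκdef
  have hκpos : 0 < κ := by
    have h1 : m_α * ‖γ‖ ^ 2 ≤ (m_α + m_L) * ‖γ‖ ^ 2 := by nlinarith [sq_nonneg ‖γ‖]
    rw [hκdef]
    linarith
  -- midpoint strong convexity of g
  have hmid : ∀ u v : V, g ((2⁻¹:ℝ) • (u + v)) ≤ (g u + g v) / 2 - κ * ‖u - v‖ ^ 2 := by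
    intro u v
    have hFA := FA_mid A F_A hA_pot hA_mono u v
    have hfprt : f ((2⁻¹:ℝ) • (u + v)) = 2⁻¹ * (f u + f v) := by
      rw [map_smul, map_add]
      simp [smul_eq_mul]
    set e : X := γ v - γ u with he
    have hHyp : ∀ s t : ℝ, s < t →
        clarkeDeriv j (γ u + s • e) e + clarkeDeriv j (γ u + t • e) (-e)
          ≤ (m_α * ‖e‖ ^ 2) * (t - s) := by
      intro s t hst
      have hts : 0 < t - s := sub_pos.2 hst
      set v₁ : X := γ u + s • e with hv₁
      set v₂ : X := γ u + t • e with hv₂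
      have h21 : v₂ - v₁ = (t - s) • e := by
        rw [hv₁, hv₂, sub_smul]
        abel
      have h12 : v₁ - v₂ = (t - s) • (-e) := by
        rw [smul_neg, ← h21]
        abel
      have hmono := hJ_mono (γ w) (γ w) v₁ v₂
      rw [h21, h12] at hmono
      simp only [sub_self, norm_zero, mul_zero, zero_mul, add_zero] at hmono
      have hnorm : ‖(t - s) • -e‖ ^ 2 = (t - s) ^ 2 * ‖e‖ ^ 2 := by
        rw [norm_smul, norm_neg, Real.norm_eq_abs, mul_pow, sq_abs]
      rw [hnorm] at hmono
      have hs1 := smul_clarkeDeriv_le hj hts v₁ e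
      have hs2 := smul_clarkeDeriv_le hj hts v₂ (-e)
      have hkey : (t - s) * (clarkeDeriv j v₁ e + clarkeDeriv j v₂ (-e))
          ≤ m_α * ((t - s) ^ 2 * ‖e‖ ^ 2) := by nlinarith [hs1, hs2, hmono]
      have := mul_le_mul_of_nonneg_left hkey (le_of_lt (inv_pos.2 hts))
      rw [← mul_assoc, inv_mul_cancel₀ (ne_of_gt hts), one_mul] at this
      calc clarkeDeriv j v₁ e + clarkeDeriv j v₂ (-e)
          ≤ (t - s)⁻¹ * (m_α * ((t - s) ^ 2 * ‖e‖ ^ 2)) := this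
        _ = (m_α * ‖e‖ ^ 2) * (t - s) := by
            field_simp
    have hJmid := jmid hj (γ u) e (by positivity) hHyp
    have hg1 : γ ((2⁻¹:ℝ) • (u + v)) = γ u + (2⁻¹:ℝ) • e := by
      rw [map_smul, map_add, he]
      module
    have hg2 : γ u + e = γ v := by rw [he]; abel
    rw [hg2] at hJmid
    have hne : ‖e‖ ^ 2 ≤ ‖γ‖ ^ 2 * ‖u - v‖ ^ 2 := by
      have h1 : ‖e‖ ≤ ‖γ‖ * ‖u - v‖ := by
        rw [he, ← map_sub]
        calc ‖γ (v - u)‖ ≤ ‖γ‖ * ‖v - u‖ := γ.le_opNorm _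
          _ = ‖γ‖ * ‖u - v‖ := by rw [norm_sub_rev]
      nlinarith [norm_nonneg e, norm_nonneg (u - v), norm_nonneg γ]
    have hJe : m_α * ‖e‖ ^ 2 / 8 ≤ m_α * (‖γ‖ ^ 2 * ‖u - v‖ ^ 2) / 8 := by
      have := mul_le_mul_of_nonneg_left hne hm_α
      linarith
    have hκexp : κ * ‖u - v‖ ^ 2
        = m_A / 8 * ‖u - v‖ ^ 2 - m_α * (‖γ‖ ^ 2 * ‖u - v‖ ^ 2) / 8 := by
      rw [hκdef]
      ring
    simp only [hgdef]
    rw [hg1, hfprt]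
    linarith [hFA, hJmid, hJe]
  -- continuity of g
  have hgc : Continuous g := by
    apply Continuous.add
    · exact (FA_cont A F_A hL_A hA_lip hA_pot).sub f.continuous
    · exact hj.continuous.comp γ.continuous
  -- local Lipschitz-type lower bound at 0
  obtain ⟨K, hK0, δ, hδpos, hloc⟩ :
      ∃ K, 0 ≤ K ∧ ∃ δ, 0 < δ ∧ ∀ v : V, ‖v‖ ≤ δ → g 0 - K * ‖v‖ ≤ g v := by
    obtain ⟨Kj, t, ht, hlip⟩ := hj (γ (0:V))
    obtain ⟨ε, hεpos, hball⟩ := Metric.mem_nhds_iff.1 ht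
    refine ⟨‖A 0‖ + L_A + ‖f‖ + (Kj:ℝ) * ‖γ‖, by positivity,
      min 1 (ε / (2 * (‖γ‖ + 1))), by positivity, ?_⟩
    intro v hv
    have hv1 : ‖v‖ ≤ 1 := le_trans hv (min_le_left _ _)
    have hv2 : ‖v‖ ≤ ε / (2 * (‖γ‖ + 1)) := le_trans hv (min_le_right _ _)
    have hγnn : (0:ℝ) ≤ ‖γ‖ := norm_nonneg γ
    have hγv : γ v ∈ Metric.ball (γ (0:V)) ε := by
      rw [Metric.mem_ball, dist_eq_norm, map_zero, sub_zero]
      have h1 : ‖γ v‖ ≤ ‖γ‖ * ‖v‖ := γ.le_opNorm v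
      have h2 : ‖γ‖ * ‖v‖ < ε := by
        have h3 : ‖γ‖ * ‖v‖ ≤ ‖γ‖ * (ε / (2 * (‖γ‖ + 1))) :=
          mul_le_mul_of_nonneg_left hv2 hγnn
        have h4 : ‖γ‖ * (ε / (2 * (‖γ‖ + 1))) < ε := by
          rw [mul_div_assoc']
          rw [div_lt_iff₀ (by positivity)]
          nlinarith
        linarith
      linarith
    have hγ0 : γ (0:V) ∈ Metric.ball (γ (0:V)) ε := Metric.mem_ball_self hεpos
    have hJb : |j (γ v) - j (γ (0:V))| ≤ (Kj:ℝ) * ‖γ v - γ (0:V)‖ := by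
      have := hlip.dist_le_mul _ (hball hγv) _ (hball hγ0)
      rwa [Real.dist_eq, dist_eq_norm] at this
    have hJb2 : |j (γ v) - j (γ (0:V))| ≤ (Kj:ℝ) * ‖γ‖ * ‖v‖ := by
      have h1 : ‖γ v - γ (0:V)‖ ≤ ‖γ‖ * ‖v‖ := by
        rw [map_zero, sub_zero]
        exact γ.le_opNorm v
      have h2 := mul_le_mul_of_nonneg_left h1 Kj.coe_nonneg
      calc |j (γ v) - j (γ (0:V))| ≤ (Kj:ℝ) * ‖γ v - γ (0:V)‖ := hJb
        _ ≤ (Kj:ℝ) * (‖γ‖ * ‖v‖) := h2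
        _ = (Kj:ℝ) * ‖γ‖ * ‖v‖ := by ring
    have hFb := FA_lip A F_A hL_A hA_lip hA_pot 0 v
    rw [sub_zero] at hFb
    have hFb2 : |F_A v - F_A 0| ≤ (‖A 0‖ + L_A) * ‖v‖ := by
      have h1 : (‖A 0‖ + L_A * ‖v‖) * ‖v‖ ≤ (‖A 0‖ + L_A) * ‖v‖ := by
        have := mul_le_mul_of_nonneg_left hv1 (le_of_lt hL_A)
        nlinarith [norm_nonneg v]
      linarith
    have hfb : |f v| ≤ ‖f‖ * ‖v‖ := f.le_opNorm v
    simp only [hgdef]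
    rw [map_zero f]
    have ha1 : F_A 0 - F_A v ≤ (‖A 0‖ + L_A) * ‖v‖ := by
      have := abs_le.1 hFb2
      linarith [this.1]
    have ha2 : j (γ (0:V)) - j (γ v) ≤ (Kj:ℝ) * ‖γ‖ * ‖v‖ := by
      have := abs_le.1 hJb2
      linarith [this.1]
    have ha3 : f v ≤ ‖f‖ * ‖v‖ := by
      have := abs_le.1 hfb
      linarith [this.2]
    nlinarith [ha1, ha2, ha3]
  -- conclude
  have := exists_unique_min g hgc hκpos hmid hδpos hK0 hloc
  exact this
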